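/- Let l be a prime, let ℤ_l denote the l-adic integers and ℚ_l the l-adic numbers, and let H = ℤ_l[T₀, T₀⁻¹, T₁] be the Laurent-polynomial-in-T₀, polynomial-in-T₁ algebra over ℤ_l. The ℤ_l-algebra homomorphism H → ℚ_l determined by T₀ ↦ 1 and T₁ ↦ l⁻¹ is surjective; consequently ℚ_l, with the H-module structure induced by this homomorphism, is a simple H-module, and it is not finitely generated as a ℤ_l-module. -/

import Mathlib

open Polynomial LaurentPolynomial

/-- Let `l` be a prime and let `H = ℤ_l[T₀, T₀⁻¹, T₁]`, realized as the polynomial ring in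
`T₁ = X` over the Laurent polynomial ring `ℤ_l[T₀, T₀⁻¹]` (with `T₀ = C (T 1)`). There is a
`ℤ_l`-algebra homomorphism `f : H → ℚ_l` with `f T₀ = 1` and `f T₁ = l⁻¹`; it is surjective;
`ℚ_l` with the `H`-module structure induced by `f` is a simple `H`-module; and `ℚ_l` is not
finitely generated as a `ℤ_l`-module. -/
theorem padic_simple_not_finite (l : ℕ) [Fact l.Prime] :
    ∃ f : Polynomial (LaurentPolynomial ℤ_[l]) →ₐ[ℤ_[l]] ℚ_[l],
      f (Polynomial.C (LaurentPolynomial.T 1)) = 1 ∧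
      f Polynomial.X = ((l : ℚ_[l]))⁻¹ ∧
      Function.Surjective f ∧
      (@IsSimpleModule (Polynomial (LaurentPolynomial ℤ_[l])) _ ℚ_[l] _
        (Module.compHom ℚ_[l] f.toRingHom)) ∧
      ¬ Module.Finite ℤ_[l] ℚ_[l] := by
  have hl : (1 : ℝ) < (l : ℝ) := by exact_mod_cast (Fact.out : l.Prime).one_lt
  have hl0 : (l : ℚ_[l]) ≠ 0 := by
    exact_mod_cast (Nat.cast_ne_zero (R := ℚ_[l])).mpr (Fact.out : l.Prime).ne_zero
  -- the evaluation T₀ ↦ 1 on Laurent polynomials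
  let g : LaurentPolynomial ℤ_[l] →ₐ[ℤ_[l]] ℚ_[l] :=
    AddMonoidAlgebra.lift ℤ_[l] ℚ_[l] ℤ 1
  have hgT : ∀ n : ℤ, g (LaurentPolynomial.T n) = 1 := by
    intro n
    simpa using AddMonoidAlgebra.lift_single (R := ℤ_[l]) (M := ℤ)
      (1 : Multiplicative ℤ →* ℚ_[l]) n (1 : ℤ_[l])
  refine ⟨Polynomial.aevalTower g ((l : ℚ_[l]))⁻¹, ?_, ?_, ?_, ?_, ?_⟩
  · rw [Polynomial.aevalTower_C]; exact hgT 1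
  · exact Polynomial.aevalTower_X _ _
  · -- surjectivity
    intro q
    obtain ⟨n, hn⟩ := pow_unbounded_of_one_lt ‖q‖ hl
    have hmem : ‖q * (l : ℚ_[l]) ^ n‖ ≤ 1 := by
      rw [norm_mul, norm_pow, Padic.norm_p]
      calc ‖q‖ * ((l : ℝ)⁻¹) ^ n ≤ (l : ℝ) ^ n * ((l : ℝ)⁻¹) ^ n := by
            apply mul_le_mul_of_nonneg_right hn.le (by positivity)
        _ = 1 := by
            rw [← mul_pow, mul_inv_cancel₀ (by positivity), one_pow]
    refine ⟨Polynomial.C (LaurentPolynomial.C ⟨q * (l : ℚ_[l]) ^ n, hmem⟩) *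
      Polynomial.X ^ n, ?_⟩
    rw [map_mul, map_pow, Polynomial.aevalTower_X, Polynomial.aevalTower_C]
    have : g (LaurentPolynomial.C ⟨q * (l : ℚ_[l]) ^ n, hmem⟩)
        = q * (l : ℚ_[l]) ^ n := by
      exact g.commutes _
    rw [this]
    field_simp
    rw [mul_assoc, ← mul_pow, mul_one_div_cancel hl0, one_pow, mul_one]
  · -- simplicity
    set f := Polynomial.aevalTower g ((l : ℚ_[l]))⁻¹ with hf
    letI : Module (Polynomial (LaurentPolynomial ℤ_[l])) ℚ_[l] :=
      Module.compHom ℚ_[l] f.toRingHom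
    have hsmul : ∀ (p : Polynomial (LaurentPolynomial ℤ_[l])) (x : ℚ_[l]),
        p • x = f p * x := fun _ _ => rfl
    have hsurj : Function.Surjective f := by
      intro q
      obtain ⟨n, hn⟩ := pow_unbounded_of_one_lt ‖q‖ hl
      have hmem : ‖q * (l : ℚ_[l]) ^ n‖ ≤ 1 := by
        rw [norm_mul, norm_pow, Padic.norm_p]
        calc ‖q‖ * ((l : ℝ)⁻¹) ^ n ≤ (l : ℝ) ^ n * ((l : ℝ)⁻¹) ^ n := by
              apply mul_le_mul_of_nonneg_right hn.le (by positivity)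
          _ = 1 := by
              rw [← mul_pow, mul_inv_cancel₀ (by positivity), one_pow]
      refine ⟨Polynomial.C (LaurentPolynomial.C ⟨q * (l : ℚ_[l]) ^ n, hmem⟩) *
        Polynomial.X ^ n, ?_⟩
      rw [hf, map_mul, map_pow, Polynomial.aevalTower_X, Polynomial.aevalTower_C]
      have : g (LaurentPolynomial.C ⟨q * (l : ℚ_[l]) ^ n, hmem⟩)
          = q * (l : ℚ_[l]) ^ n := by
        exact g.commutes _
      rw [this]
      field_simp
      rw [mul_assoc, ← mul_pow, mul_one_div_cancel hl0, one_pow, mul_one]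
    rw [isSimpleModule_iff]
    constructor
    intro N
    by_cases hN : N = ⊥
    · exact Or.inl hN
    · right
      obtain ⟨x, hxN, hx0⟩ := Submodule.exists_mem_ne_zero_of_ne_bot hN
      rw [Submodule.eq_top_iff']
      intro y
      obtain ⟨p, hp⟩ := hsurj (y * x⁻¹)
      have : p • x = y := by
        rw [hsmul, hp, mul_assoc, inv_mul_cancel₀ hx0, mul_one]
      rw [← this]
      exact N.smul_mem p hxN
  · -- not finitely generated
    intro hfin
    have hint : IsIntegral ℤ_[l] ((l : ℚ_[l]))⁻¹ :=
      IsIntegral.of_finite ℤ_[l] _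
    obtain ⟨y, hy⟩ := IsIntegrallyClosed.isIntegral_iff.mp hint
    have hy1 : ‖((l : ℚ_[l]))⁻¹‖ ≤ 1 := by
      rw [← hy]; exact y.norm_le_one
    rw [norm_inv, Padic.norm_p, inv_inv] at hy1
    exact absurd hy1 (not_le.mpr hl)
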